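/- Let k ≥ 0 and μ the measure on ℝ with density |x|^{2k}. For every ε > 0 there exists C > 0 such that μ(B(x,√t)) / μ(B(y,√t)) ≤ C·e^{ε(x−y)²/t} for all x, y ∈ ℝ and t > 0. -/

import Mathlib

open Real MeasureTheory

/-- The measure `|x|^{2k} dx` on `ℝ`. -/
noncomputable def dunklMeasure1 (k : ℝ) : Measure ℝ :=
  volume.withDensity (fun x => ENNReal.ofReal (|x| ^ (2 * k)))

lemma dunkl_meas (k : ℝ) : Measurable (fun x : ℝ => ENNReal.ofReal (|x| ^ (2 * k))) := by
  fun_prop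

lemma dunkl_upper (k : ℝ) (hk : 0 ≤ k) (x r : ℝ) (hr : 0 ≤ r) :
    dunklMeasure1 k (Metric.closedBall x r) ≤
      ENNReal.ofReal ((|x| + r) ^ (2 * k) * (2 * r)) := by
  rw [dunklMeasure1, withDensity_apply _ measurableSet_closedBall]
  calc ∫⁻ s in Metric.closedBall x r, ENNReal.ofReal (|s| ^ (2 * k))
      ≤ ∫⁻ _ in Metric.closedBall x r, ENNReal.ofReal ((|x| + r) ^ (2 * k)) := by
        refine setLIntegral_mono measurable_const fun s hs => ?_
        refine ENNReal.ofReal_le_ofReal (Real.rpow_le_rpow (abs_nonneg _) ?_ (by positivity))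
        have h1 : dist s x ≤ r := Metric.mem_closedBall.1 hs
        calc |s| = |x + (s - x)| := by ring_nf
          _ ≤ |x| + |s - x| := abs_add_le _ _
          _ ≤ |x| + r := by
              have : |s - x| = dist s x := by rw [Real.dist_eq]
              linarith [this ▸ h1]
    _ = ENNReal.ofReal ((|x| + r) ^ (2 * k) * (2 * r)) := by
        rw [setLIntegral_const, Real.volume_closedBall,
          ← ENNReal.ofReal_mul (by positivity)]

lemma dunkl_lower (k : ℝ) (hk : 0 ≤ k) (y r : ℝ) (hr : 0 < r) :
    ENNReal.ofReal (((|y| + r) / 2) ^ (2 * k) * (r / 2)) ≤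
      dunklMeasure1 k (Metric.closedBall y r) := by
  obtain ⟨a, b, hab, hsub, hbig⟩ :
      ∃ a b : ℝ, b - a = r / 2 ∧ Set.Icc a b ⊆ Metric.closedBall y r ∧
        ∀ s ∈ Set.Icc a b, (|y| + r) / 2 ≤ |s| := by
    rcases le_or_gt 0 y with hy | hy
    · refine ⟨y + r / 2, y + r, by ring, ?_, ?_⟩
      · intro s hs
        simp only [Metric.mem_closedBall, Real.dist_eq]
        rw [abs_le]; constructor <;> [linarith [hs.1]; linarith [hs.2]]
      · intro s hs
        have h0 : 0 ≤ s := by linarith [hs.1]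
        rw [abs_of_nonneg hy, abs_of_nonneg h0]
        linarith [hs.1]
    · refine ⟨y - r, y - r / 2, by ring, ?_, ?_⟩
      · intro s hs
        simp only [Metric.mem_closedBall, Real.dist_eq]
        rw [abs_le]; constructor <;> [linarith [hs.1]; linarith [hs.2]]
      · intro s hs
        have h0 : s ≤ 0 := by linarith [hs.2]
        rw [abs_of_neg hy, abs_of_nonpos h0]
        linarith [hs.2]
  rw [dunklMeasure1, withDensity_apply _ measurableSet_closedBall]
  calc ENNReal.ofReal (((|y| + r) / 2) ^ (2 * k) * (r / 2))
      = ∫⁻ _ in Set.Icc a b, ENNReal.ofReal (((|y| + r) / 2) ^ (2 * k)) := by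
        rw [setLIntegral_const, Real.volume_Icc, hab,
          ← ENNReal.ofReal_mul (by positivity)]
    _ ≤ ∫⁻ s in Set.Icc a b, ENNReal.ofReal (|s| ^ (2 * k)) := by
        refine setLIntegral_mono (dunkl_meas k) fun s hs => ?_
        exact ENNReal.ofReal_le_ofReal
          (Real.rpow_le_rpow (by positivity) (hbig s hs) (by positivity))
    _ ≤ ∫⁻ s in Metric.closedBall y r, ENNReal.ofReal (|s| ^ (2 * k)) :=
        lintegral_mono_set hsub

lemma dunkl_key_ineq (k : ℝ) (hk : 0 ≤ k) (ε : ℝ) (hε : 0 < ε) (x y r t : ℝ) (hr : 0 < r)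
    (ht : r ^ 2 = t) :
    (|x| + r) ^ (2 * k) * (2 * r) ≤
      (4 * (2:ℝ) ^ (2 * k) * Real.exp (k ^ 2 / ε) * Real.exp (ε * (x - y) ^ 2 / t)) *
        (((|y| + r) / 2) ^ (2 * k) * (r / 2)) := by
  set u := |x - y| with hu
  set v := u / r with hv
  have hu0 : 0 ≤ u := abs_nonneg _
  have hv0 : 0 ≤ v := div_nonneg hu0 hr.le
  have hb : (0:ℝ) < |y| + r := by positivity
  have hab : |x| + r ≤ (1 + v) * (|y| + r) := by
    have h1 : |x| ≤ |y| + u := by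
      have := abs_sub_abs_le_abs_sub x y
      linarith
    have h2 : u ≤ v * (|y| + r) := by
      have : u = v * r := by rw [hv, div_mul_cancel₀ _ hr.ne']
      nlinarith [abs_nonneg y]
    nlinarith
  have hstep1 : (|x| + r) ^ (2 * k) ≤ (1 + v) ^ (2 * k) * (|y| + r) ^ (2 * k) := by
    rw [← Real.mul_rpow (by linarith) hb.le]
    exact Real.rpow_le_rpow (by positivity) hab (by positivity)
  have hstep2 : (1 + v) ^ (2 * k) ≤ Real.exp (k ^ 2 / ε) * Real.exp (ε * (x - y) ^ 2 / t) := by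
    calc (1 + v) ^ (2 * k) ≤ (Real.exp v) ^ (2 * k) :=
          Real.rpow_le_rpow (by linarith) (by linarith [Real.add_one_le_exp v]) (by positivity)
      _ = Real.exp (v * (2 * k)) := by
          rw [Real.rpow_def_of_pos (Real.exp_pos v), Real.log_exp]
      _ ≤ Real.exp (k ^ 2 / ε + ε * (x - y) ^ 2 / t) := by
          apply Real.exp_le_exp.2
          have hvt : ε * (x - y) ^ 2 / t = ε * v ^ 2 := by
            rw [mul_div_assoc, show (x - y) ^ 2 / t = v ^ 2 by rw [← ht, hv, hu, div_pow, sq_abs]]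
          rw [hvt]
          have hke : ε * (k ^ 2 / ε) = k ^ 2 := by field_simp
          nlinarith [sq_nonneg (ε * v - k)]
      _ = Real.exp (k ^ 2 / ε) * Real.exp (ε * (x - y) ^ 2 / t) := by
          rw [← Real.exp_add]
  have hdiv : ((|y| + r) / 2) ^ (2 * k) = (|y| + r) ^ (2 * k) / (2:ℝ) ^ (2 * k) := by
    rw [Real.div_rpow hb.le (by norm_num)]
  rw [hdiv]
  have h2k : (0:ℝ) < (2:ℝ) ^ (2 * k) := Real.rpow_pos_of_pos (by norm_num) _
  have hbk : (0:ℝ) ≤ (|y| + r) ^ (2 * k) := Real.rpow_nonneg hb.le _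
  have key : (|x| + r) ^ (2 * k) ≤
      Real.exp (k ^ 2 / ε) * Real.exp (ε * (x - y) ^ 2 / t) * (|y| + r) ^ (2 * k) := by
    calc (|x| + r) ^ (2 * k) ≤ (1 + v) ^ (2 * k) * (|y| + r) ^ (2 * k) := hstep1
      _ ≤ _ := by
          apply mul_le_mul_of_nonneg_right hstep2 hbk
  have heq : (4 * (2:ℝ) ^ (2 * k) * Real.exp (k ^ 2 / ε) * Real.exp (ε * (x - y) ^ 2 / t)) *
        ((|y| + r) ^ (2 * k) / (2:ℝ) ^ (2 * k) * (r / 2))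
      = (Real.exp (k ^ 2 / ε) * Real.exp (ε * (x - y) ^ 2 / t) * (|y| + r) ^ (2 * k)) *
          (2 * r) := by
    field_simp
    ring
  rw [heq]
  exact mul_le_mul_of_nonneg_right key (by positivity)

theorem measure_ball_quotient_gaussian (k : ℝ) (hk : 0 ≤ k) :
    ∀ ε > (0:ℝ), ∃ C > 0, ∀ x y : ℝ, ∀ t : ℝ, 0 < t →
      dunklMeasure1 k (Metric.closedBall x (Real.sqrt t)) ≤
        ENNReal.ofReal (C * Real.exp (ε * (x - y) ^ 2 / t)) *
          dunklMeasure1 k (Metric.closedBall y (Real.sqrt t)) := by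
  intro ε hε
  refine ⟨4 * (2:ℝ) ^ (2 * k) * Real.exp (k ^ 2 / ε), by positivity, ?_⟩
  intro x y t ht
  set r := Real.sqrt t with hrdef
  have hr : 0 < r := Real.sqrt_pos.2 ht
  have hrt : r ^ 2 = t := Real.sq_sqrt ht.le
  calc dunklMeasure1 k (Metric.closedBall x r)
      ≤ ENNReal.ofReal ((|x| + r) ^ (2 * k) * (2 * r)) := dunkl_upper k hk x r hr.le
    _ ≤ ENNReal.ofReal ((4 * (2:ℝ) ^ (2 * k) * Real.exp (k ^ 2 / ε) *
          Real.exp (ε * (x - y) ^ 2 / t)) * (((|y| + r) / 2) ^ (2 * k) * (r / 2))) :=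
        ENNReal.ofReal_le_ofReal (dunkl_key_ineq k hk ε hε x y r t hr hrt)
    _ = ENNReal.ofReal (4 * (2:ℝ) ^ (2 * k) * Real.exp (k ^ 2 / ε) *
          Real.exp (ε * (x - y) ^ 2 / t)) *
        ENNReal.ofReal (((|y| + r) / 2) ^ (2 * k) * (r / 2)) := by
        rw [← ENNReal.ofReal_mul (by positivity)]
    _ ≤ ENNReal.ofReal (4 * (2:ℝ) ^ (2 * k) * Real.exp (k ^ 2 / ε) *
          Real.exp (ε * (x - y) ^ 2 / t)) * dunklMeasure1 k (Metric.closedBall y r) :=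
        mul_le_mul_right (dunkl_lower k hk y r hr) _
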